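/- Let X = X[λ, μ, 𝒜, C̄]. Every closed bounded subspace F ⊆ X is a D-subspace of X: for every open neighborhood assignment U : F → τ(X) (with x ∈ U(x) for all x ∈ F) there is a closed discrete D ⊆ F with F ⊆ ⋃{U(d) : d ∈ D}. -/

import Mathlib

open Set Ordinal Cardinal Topology

noncomputable section

namespace DSoukupPaper

/-- The set `S^λ_μ` of ordinals below `lam` of cofinality `mu`. -/
def Sset (lam : Ordinal.{0}) (mu : Cardinal.{0}) : Set Ordinal := {α | α < lam ∧ α.cof = mu}

/-- `C` is a club in the ordinal `o`. -/
def IsClubBelow (C : Set Ordinal.{0}) (o : Ordinal.{0}) : Prop :=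
  C ⊆ Set.Iio o ∧ (∀ β < o, ∃ γ ∈ C, β ≤ γ) ∧
    (∀ β < o, Order.IsSuccLimit β → (∀ γ < β, ∃ δ ∈ C, γ < δ ∧ δ < β) → β ∈ C)

/-- `A` is nonstationary in the ordinal `o`. -/
def IsNonstationaryBelow (A : Set Ordinal.{0}) (o : Ordinal.{0}) : Prop :=
  ∃ C : Set Ordinal, IsClubBelow C o ∧ ∀ x ∈ A, x ∉ C

/-- `A` is stationary in the ordinal `o`. -/
def IsStationaryBelow (A : Set Ordinal.{0}) (o : Ordinal.{0}) : Prop :=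
  ∀ C : Set Ordinal, IsClubBelow C o → ∃ x ∈ A, x ∈ C

/-- A `T₁` space is linearly D iff every nontrivial monotone open cover admits a
closed discrete big set (Guo–Junnila characterization, taken as definition). -/
def LinearlyDSpace (Y : Type*) [TopologicalSpace Y] : Prop :=
  ∀ 𝒰 : Set (Set Y), (∀ U ∈ 𝒰, IsOpen U) → ⋃₀ 𝒰 = Set.univ →
    IsChain (· ⊆ ·) 𝒰 → (∀ U ∈ 𝒰, U ≠ Set.univ) →
    ∃ D : Set Y, IsClosed D ∧ DiscreteTopology D ∧ ∀ U ∈ 𝒰, ¬D ⊆ U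

/-- The data of the construction `X[λ,μ,𝒜,C̄]`: cardinals `λ > μ = cf(μ)`,
a MAD family `𝒜 = {M^φ : φ < κ} ⊆ [μ]^μ`, and an `S^λ_μ`-club sequence
`C̄ = ⟨C_α : α ∈ S^λ_μ⟩`, given via increasing enumerations `a α : μ → C_α`. -/
structure Setup where
  lam : Cardinal.{0}
  mu : Cardinal.{0}
  kappa : Cardinal.{0}
  mu_reg : mu.IsRegular
  mu_lt_lam : mu < lam
  /-- the MAD family: `M φ` for `φ < κ` -/
  M : Ordinal.{0} → Set Ordinal.{0}
  M_sub : ∀ φ < kappa.ord, M φ ⊆ Set.Iio mu.ord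
  M_card : ∀ φ < kappa.ord, #(M φ) = Cardinal.lift.{1} mu
  M_ad : ∀ φ < kappa.ord, ∀ ψ < kappa.ord, φ ≠ ψ →
    #(↥(M φ ∩ M ψ)) < Cardinal.lift.{1} mu
  M_mad : ∀ N ⊆ Set.Iio mu.ord, #N = Cardinal.lift.{1} mu →
    ∃ φ < kappa.ord, #(↥(N ∩ M φ)) = Cardinal.lift.{1} mu
  /-- the club sequence: `a α ξ` is the `ξ`-th element of `C_α` -/
  a : Ordinal.{0} → Ordinal.{0} → Ordinal.{0}
  a_mono : ∀ α ∈ Sset lam.ord mu, ∀ ξ < mu.ord, ∀ ζ < ξ, a α ζ < a α ξ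
  a_lt : ∀ α ∈ Sset lam.ord mu, ∀ ξ < mu.ord, a α ξ < α
  a_unbounded : ∀ α ∈ Sset lam.ord mu, ∀ β < α, ∃ ξ < mu.ord, β ≤ a α ξ
  a_closed : ∀ α ∈ Sset lam.ord mu, ∀ ξ < mu.ord, Order.IsSuccLimit ξ →
    IsLUB (a α '' Set.Iio ξ) (a α ξ)

namespace Setup

variable (P : Setup)

/-- `C_α` as a set. -/
def C (α : Ordinal) : Set Ordinal := P.a α '' Set.Iio P.mu.ord

open Classical in
/-- the interval `I^ξ_α`. -/
def I (α ξ : Ordinal) : Set Ordinal :=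
  if Order.IsSuccLimit ξ then Set.Icc (P.a α ξ) (P.a α (ξ + 1)) else Set.Ioc (P.a α ξ) (P.a α (ξ + 1))

/-- the underlying set of the space: a subset of `λ × κ`. -/
def Xset : Set (Ordinal × Ordinal) :=
  {p | p.1 < P.lam.ord ∧
    ((p.1 ∈ Sset P.lam.ord P.mu ∧ p.2 < P.kappa.ord) ∨
      (p.1 ∉ Sset P.lam.ord P.mu ∧ p.2 = 0))}

/-- the column `X_α` (as a set of pairs). -/
def col (α : Ordinal) : Set (Ordinal × Ordinal) := {p ∈ P.Xset | p.1 = α}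

/-- basic neighborhood `U((α,φ),η)` for `α ∈ S^λ_μ`. -/
def U1 (α φ η : Ordinal) : Set (Ordinal × Ordinal) :=
  {(α, φ)} ∪ ⋃ γ ∈ (⋃ ξ ∈ {ξ | ξ ∈ P.M φ ∧ η ≤ ξ}, P.I α ξ), P.col γ

/-- basic neighborhood `U(α,β) = ⋃{X_γ : β < γ ≤ α}`. -/
def U3 (α β : Ordinal) : Set (Ordinal × Ordinal) := ⋃ γ ∈ Set.Ioc β α, P.col γ

/-- the collection of basic open sets. -/
def basics : Set (Set (Ordinal × Ordinal)) :=
  {B | (∃ α ∈ Sset P.lam.ord P.mu, ∃ φ < P.kappa.ord, ∃ η < P.mu.ord, B = P.U1 α φ η) ∨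
    (∃ α < P.lam.ord, α.cof < P.mu ∧ B = {(α, 0)}) ∨
    (∃ α < P.lam.ord, P.mu < α.cof ∧ ∃ β < α, B = P.U3 α β)}

/-- the topology of `X[λ,μ,𝒜,C̄]`, generated by the basic open sets. -/
instance instTopo : TopologicalSpace ↥P.Xset :=
  TopologicalSpace.generateFrom {V | ∃ B ∈ P.basics, V = Subtype.val ⁻¹' B}

/-- the column `X_α` viewed inside the space. -/
def colS (α : Ordinal) : Set ↥P.Xset := {x | (x : Ordinal × Ordinal).1 = α}

/-- the projection `π(F) = {α < λ : F ∩ X_α ≠ ∅}`. -/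
def pi (F : Set ↥P.Xset) : Set Ordinal := {α | ∃ x ∈ F, (x : Ordinal × Ordinal).1 = α}

/-- `F` is unbounded iff `π(F)` is unbounded in `λ`. -/
def Unbounded (F : Set ↥P.Xset) : Prop := ∀ β < P.lam.ord, ∃ γ ∈ P.pi F, β < γ

/-- `F` is high enough iff `|{α < λ : |F_α| = |F|}| ≥ μ`. -/
def HighEnough (F : Set ↥P.Xset) : Prop :=
  Cardinal.lift.{1} P.mu ≤ #({α | #(↥(F ∩ P.colS α)) = #F} : Set Ordinal)

end Setup
end DSoukupPaper

namespace DSoukupPaper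

namespace Setup

variable {P : Setup}

lemma mu_ord_limit (P : Setup) : Order.IsSuccLimit P.mu.ord :=
  Cardinal.isSuccLimit_ord P.mu_reg.aleph0_le

lemma lam_ord_limit (P : Setup) : Order.IsSuccLimit P.lam.ord :=
  Cardinal.isSuccLimit_ord (P.mu_reg.aleph0_le.trans P.mu_lt_lam.le)

lemma succ_lt_mu_ord {ξ : Ordinal} (h : ξ < P.mu.ord) : ξ + 1 < P.mu.ord := by
  rw [Ordinal.add_one_eq_succ]
  exact (mu_ord_limit P).succ_lt h

lemma fst_lt_lam (x : ↥P.Xset) : (x : Ordinal × Ordinal).1 < P.lam.ord := x.2.1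

lemma snd_lt_kappa {x : ↥P.Xset} (h : (x : Ordinal × Ordinal).1 ∈ Sset P.lam.ord P.mu) :
    (x : Ordinal × Ordinal).2 < P.kappa.ord := by
  rcases x.2.2 with h' | h'
  · exact h'.2
  · exact (h'.1 h).elim

lemma snd_eq_zero {x : ↥P.Xset} (h : (x : Ordinal × Ordinal).1 ∉ Sset P.lam.ord P.mu) :
    (x : Ordinal × Ordinal).2 = 0 := by
  rcases x.2.2 with h' | h'
  · exact (h h'.1).elim
  · exact h'.2

lemma ext_of_not_Sset {x y : ↥P.Xset} (h : (x : Ordinal × Ordinal).1 ∉ Sset P.lam.ord P.mu)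
    (hfst : (y : Ordinal × Ordinal).1 = (x : Ordinal × Ordinal).1) : y = x := by
  have hy : (y : Ordinal × Ordinal).1 ∉ Sset P.lam.ord P.mu := by rw [hfst]; exact h
  apply Subtype.ext
  apply Prod.ext hfst
  rw [snd_eq_zero hy, snd_eq_zero h]

lemma cof_ne_mu_of_not_Sset {x : ↥P.Xset} (h : (x : Ordinal × Ordinal).1 ∉ Sset P.lam.ord P.mu) :
    (x : Ordinal × Ordinal).1.cof ≠ P.mu := fun hc => h ⟨fst_lt_lam x, hc⟩

lemma I_bounds {α ξ γ : Ordinal} (h : γ ∈ P.I α ξ) : P.a α ξ ≤ γ ∧ γ ≤ P.a α (ξ + 1) := by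
  unfold Setup.I at h
  split_ifs at h
  · exact ⟨h.1, h.2⟩
  · exact ⟨h.1.le, h.2⟩

lemma Ioc_subset_I (α ξ : Ordinal) : Set.Ioc (P.a α ξ) (P.a α (ξ + 1)) ⊆ P.I α ξ := by
  unfold Setup.I
  split_ifs
  · exact Set.Ioc_subset_Icc_self
  · exact subset_rfl

lemma a_le_a {α : Ordinal} (hα : α ∈ Sset P.lam.ord P.mu) {ζ ξ : Ordinal}
    (hξ : ξ < P.mu.ord) (h : ζ ≤ ξ) : P.a α ζ ≤ P.a α ξ := by
  rcases h.lt_or_eq with h' | rfl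
  · exact (P.a_mono α hα ξ hξ ζ h').le
  · rfl

lemma mem_U1_iff {α φ η : Ordinal} {p : Ordinal × Ordinal} :
    p ∈ P.U1 α φ η ↔ p = (α, φ) ∨ (p ∈ P.Xset ∧ ∃ ξ, ξ ∈ P.M φ ∧ η ≤ ξ ∧ p.1 ∈ P.I α ξ) := by
  constructor
  · intro hp
    rcases hp with hp | hp
    · exact Or.inl hp
    · simp only [Set.mem_iUnion, exists_prop, Set.mem_setOf_eq] at hp
      obtain ⟨γ, ⟨ξ, ⟨hM, hη⟩, hγI⟩, hpX, hpγ⟩ := hp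
      exact Or.inr ⟨hpX, ξ, hM, hη, by rw [hpγ]; exact hγI⟩
  · rintro (hp | ⟨hpX, ξ, hM, hη, hI⟩)
    · exact Or.inl hp
    · refine Or.inr ?_
      simp only [Set.mem_iUnion, exists_prop, Set.mem_setOf_eq]
      exact ⟨p.1, ⟨ξ, ⟨hM, hη⟩, hI⟩, hpX, rfl⟩

lemma mem_U3_iff {α β : Ordinal} {p : Ordinal × Ordinal} :
    p ∈ P.U3 α β ↔ p ∈ P.Xset ∧ β < p.1 ∧ p.1 ≤ α := by
  constructor
  · intro hp
    simp only [Setup.U3, Set.mem_iUnion, exists_prop, Set.mem_setOf_eq] at hp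
    obtain ⟨γ, hγ, hpX, hpγ⟩ := hp
    exact ⟨hpX, by rw [hpγ]; exact hγ.1, by rw [hpγ]; exact hγ.2⟩
  · rintro ⟨hpX, h1, h2⟩
    simp only [Setup.U3, Set.mem_iUnion, exists_prop, Set.mem_setOf_eq]
    exact ⟨p.1, ⟨h1, h2⟩, hpX, rfl⟩

lemma isOpen_basic {B : Set (Ordinal × Ordinal)} (hB : B ∈ P.basics) :
    IsOpen (Subtype.val ⁻¹' B : Set ↥P.Xset) :=
  TopologicalSpace.isOpen_generateFrom_of_mem ⟨B, hB, rfl⟩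

/-- downward neighborhood: an open neighborhood contained in the columns `≤ x.1`. -/
lemma nbhd_le (x : ↥P.Xset) :
    ∃ V : Set ↥P.Xset, IsOpen V ∧ x ∈ V ∧
      ∀ y ∈ V, (y : Ordinal × Ordinal).1 ≤ (x : Ordinal × Ordinal).1 := by
  by_cases hS : (x : Ordinal × Ordinal).1 ∈ Sset P.lam.ord P.mu
  · refine ⟨Subtype.val ⁻¹' (P.U1 (x : Ordinal × Ordinal).1 (x : Ordinal × Ordinal).2 0),
      isOpen_basic (Or.inl ⟨_, hS, _, snd_lt_kappa hS, 0, (mu_ord_limit P).pos, rfl⟩), ?_, ?_⟩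
    · exact mem_U1_iff.mpr (Or.inl rfl)
    · intro y hy
      rcases mem_U1_iff.mp hy with h | ⟨_, ξ, hM, _, hI⟩
      · rw [show (y : Ordinal × Ordinal).1 = (x : Ordinal × Ordinal).1 from by rw [h]]
      · have hξμ : ξ < P.mu.ord := P.M_sub _ (snd_lt_kappa hS) hM
        exact ((I_bounds hI).2.trans_lt (P.a_lt _ hS _ (succ_lt_mu_ord hξμ))).le
  · rcases (cof_ne_mu_of_not_Sset hS).lt_or_gt with hlt | hgt
    · refine ⟨Subtype.val ⁻¹' {((x : Ordinal × Ordinal).1, (0 : Ordinal))},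
        isOpen_basic (Or.inr (Or.inl ⟨_, fst_lt_lam x, hlt, rfl⟩)), ?_, ?_⟩
      · simp only [Set.mem_preimage, Set.mem_singleton_iff]
        exact Prod.ext rfl (snd_eq_zero hS)
      · intro y hy
        have hyx : (y : Ordinal × Ordinal) = ((x : Ordinal × Ordinal).1, (0 : Ordinal)) :=
          Set.mem_singleton_iff.mp hy
        have h2 := congrArg Prod.fst hyx
        exact le_of_eq h2
    · have hpos : 0 < (x : Ordinal × Ordinal).1 := by
        rcases eq_zero_or_pos (x : Ordinal × Ordinal).1 with h0 | h
        · rw [h0, Ordinal.cof_zero] at hgt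
          exact ((Cardinal.zero_le P.mu).not_gt hgt).elim
        · exact h
      refine ⟨Subtype.val ⁻¹' (P.U3 (x : Ordinal × Ordinal).1 0),
        isOpen_basic (Or.inr (Or.inr ⟨_, fst_lt_lam x, hgt, 0, hpos, rfl⟩)), ?_, ?_⟩
      · exact mem_U3_iff.mpr ⟨x.2, hpos, le_rfl⟩
      · intro y hy
        exact (mem_U3_iff.mp hy).2.2

/-- strict in-between neighborhoods: every point of the neighborhood other than `x`
has first coordinate strictly between `σ` and `x.1`. -/
lemma nbhd_between (x : ↥P.Xset) {σ : Ordinal} (hσ : σ < (x : Ordinal × Ordinal).1) :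
    ∃ V : Set ↥P.Xset, IsOpen V ∧ x ∈ V ∧
      ∀ y ∈ V, y = x ∨ (σ < (y : Ordinal × Ordinal).1 ∧
        (y : Ordinal × Ordinal).1 < (x : Ordinal × Ordinal).1) := by
  by_cases hS : (x : Ordinal × Ordinal).1 ∈ Sset P.lam.ord P.mu
  · obtain ⟨ξ₀, hξ₀μ, hξ₀⟩ := P.a_unbounded _ hS σ hσ
    have hημ : ξ₀ + 1 < P.mu.ord := succ_lt_mu_ord hξ₀μ
    refine ⟨Subtype.val ⁻¹' (P.U1 (x : Ordinal × Ordinal).1 (x : Ordinal × Ordinal).2 (ξ₀ + 1)),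
      isOpen_basic (Or.inl ⟨_, hS, _, snd_lt_kappa hS, _, hημ, rfl⟩), ?_, ?_⟩
    · exact mem_U1_iff.mpr (Or.inl rfl)
    · intro y hy
      rcases mem_U1_iff.mp hy with h | ⟨_, ξ, hM, hηξ, hI⟩
      · left; exact Subtype.ext (by rw [h])
      · right
        have hξμ : ξ < P.mu.ord := P.M_sub _ (snd_lt_kappa hS) hM
        constructor
        · calc σ ≤ P.a _ ξ₀ := hξ₀
            _ < P.a _ (ξ₀ + 1) := P.a_mono _ hS _ hημ _ (by rw [Ordinal.add_one_eq_succ]; exact Order.lt_succ ξ₀)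
            _ ≤ P.a _ ξ := a_le_a hS hξμ hηξ
            _ ≤ (y : Ordinal × Ordinal).1 := (I_bounds hI).1
        · exact (I_bounds hI).2.trans_lt (P.a_lt _ hS _ (succ_lt_mu_ord hξμ))
  · rcases (cof_ne_mu_of_not_Sset hS).lt_or_gt with hlt | hgt
    · refine ⟨Subtype.val ⁻¹' {((x : Ordinal × Ordinal).1, (0 : Ordinal))},
        isOpen_basic (Or.inr (Or.inl ⟨_, fst_lt_lam x, hlt, rfl⟩)), ?_, ?_⟩
      · simp only [Set.mem_preimage, Set.mem_singleton_iff]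
        exact Prod.ext rfl (snd_eq_zero hS)
      · intro y hy
        left
        have hyx : (y : Ordinal × Ordinal) = ((x : Ordinal × Ordinal).1, (0 : Ordinal)) := hy
        exact ext_of_not_Sset hS (by rw [hyx])
    · refine ⟨Subtype.val ⁻¹' (P.U3 (x : Ordinal × Ordinal).1 σ),
        isOpen_basic (Or.inr (Or.inr ⟨_, fst_lt_lam x, hgt, σ, hσ, rfl⟩)), ?_, ?_⟩
      · exact mem_U3_iff.mpr ⟨x.2, hσ, le_rfl⟩
      · intro y hy
        obtain ⟨_, h1, h2⟩ := mem_U3_iff.mp hy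
        rcases h2.lt_or_eq with h2' | h2'
        · exact Or.inr ⟨h1, h2'⟩
        · exact Or.inl (ext_of_not_Sset hS h2')

/-- every point has a neighborhood meeting its own column only in itself. -/
lemma nbhd_isolating (x : ↥P.Xset) :
    ∃ V : Set ↥P.Xset, IsOpen V ∧ x ∈ V ∧
      ∀ y ∈ V, (y : Ordinal × Ordinal).1 = (x : Ordinal × Ordinal).1 → y = x := by
  by_cases hS : (x : Ordinal × Ordinal).1 ∈ Sset P.lam.ord P.mu
  · refine ⟨Subtype.val ⁻¹' (P.U1 (x : Ordinal × Ordinal).1 (x : Ordinal × Ordinal).2 0),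
      isOpen_basic (Or.inl ⟨_, hS, _, snd_lt_kappa hS, 0, (mu_ord_limit P).pos, rfl⟩), ?_, ?_⟩
    · exact mem_U1_iff.mpr (Or.inl rfl)
    · intro y hy hyx
      rcases mem_U1_iff.mp hy with h | ⟨_, ξ, hM, _, hI⟩
      · exact Subtype.ext (by rw [h])
      · have hξμ : ξ < P.mu.ord := P.M_sub _ (snd_lt_kappa hS) hM
        have := (I_bounds hI).2.trans_lt (P.a_lt _ hS _ (succ_lt_mu_ord hξμ))
        rw [hyx] at this
        exact absurd this (lt_irrefl _)
  · exact ⟨Set.univ, isOpen_univ, Set.mem_univ x, fun y _ hy => ext_of_not_Sset hS hy⟩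

/-- the clopen set of columns `≤ ε`. -/
def Lset (P : Setup) (ε : Ordinal) : Set ↥P.Xset := {x | (x : Ordinal × Ordinal).1 ≤ ε}

lemma isOpen_Lset (ε : Ordinal) : IsOpen (Lset P ε) := by
  rw [isOpen_iff_forall_mem_open]
  intro x hx
  obtain ⟨V, hVo, hxV, hV⟩ := nbhd_le x
  exact ⟨V, fun y hy => le_trans (hV y hy) hx, hVo, hxV⟩

lemma isClosed_Lset (ε : Ordinal) : IsClosed (Lset P ε) := by
  rw [← isOpen_compl_iff, isOpen_iff_forall_mem_open]
  intro x hx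
  have hεx : ε < (x : Ordinal × Ordinal).1 := not_le.mp hx
  obtain ⟨V, hVo, hxV, hV⟩ := nbhd_between x hεx
  refine ⟨V, ?_, hVo, hxV⟩
  intro y hy
  rcases hV y hy with rfl | ⟨h1, _⟩
  · exact hx
  · exact not_le.mpr h1

lemma isOpen_fstlt (σ : Ordinal) : IsOpen {x : ↥P.Xset | (x : Ordinal × Ordinal).1 < σ} := by
  rw [isOpen_iff_forall_mem_open]
  intro x hx
  obtain ⟨V, hVo, hxV, hV⟩ := nbhd_le x
  exact ⟨V, fun y hy => lt_of_le_of_lt (hV y hy) hx, hVo, hxV⟩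

lemma isClosed_fstlt {σ : Ordinal} (hσ : σ < P.lam.ord) (hcof : σ.cof < P.mu) :
    IsClosed {x : ↥P.Xset | (x : Ordinal × Ordinal).1 < σ} := by
  rw [← isOpen_compl_iff, isOpen_iff_forall_mem_open]
  intro x hx
  have hσx : σ ≤ (x : Ordinal × Ordinal).1 := not_lt.mp hx
  rcases hσx.lt_or_eq with hσx' | hσx'
  · obtain ⟨V, hVo, hxV, hV⟩ := nbhd_between x hσx'
    refine ⟨V, ?_, hVo, hxV⟩
    intro y hy
    rcases hV y hy with rfl | ⟨h1, _⟩
    · exact hx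
    · exact not_lt.mpr h1.le
  · have hxS : (x : Ordinal × Ordinal).1 ∉ Sset P.lam.ord P.mu := by
      intro hS
      have hc : σ.cof = P.mu := by rw [hσx']; exact hS.2
      rw [hc] at hcof
      exact absurd hcof (lt_irrefl _)
    refine ⟨Subtype.val ⁻¹' {((x : Ordinal × Ordinal).1, (0 : Ordinal))}, ?_,
      isOpen_basic (Or.inr (Or.inl ⟨_, fst_lt_lam x, by rw [← hσx']; exact hcof, rfl⟩)), ?_⟩
    · intro y hy
      have hyx : (y : Ordinal × Ordinal) = ((x : Ordinal × Ordinal).1, (0 : Ordinal)) := hy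
      have : (y : Ordinal × Ordinal).1 = (x : Ordinal × Ordinal).1 := by rw [hyx]
      rw [Set.mem_compl_iff]
      intro hmem
      rw [Set.mem_setOf_eq, this] at hmem
      exact hx hmem
    · simp only [Set.mem_preimage, Set.mem_singleton_iff]
      exact Prod.ext rfl (snd_eq_zero hxS)

lemma isClosed_colset (γ : Ordinal) :
    IsClosed {x : ↥P.Xset | (x : Ordinal × Ordinal).1 = γ} := by
  have : {x : ↥P.Xset | (x : Ordinal × Ordinal).1 = γ} =
      Lset P γ ∩ {x : ↥P.Xset | (x : Ordinal × Ordinal).1 < γ}ᶜ := by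
    ext x
    simp only [Set.mem_setOf_eq, Set.mem_inter_iff, Set.mem_compl_iff, Lset, not_lt]
    constructor
    · intro h; exact ⟨le_of_eq h, ge_of_eq h⟩
    · intro ⟨h1, h2⟩; exact le_antisymm h1 h2
  rw [this]
  exact (isClosed_Lset γ).inter (isOpen_fstlt γ).isClosed_compl

lemma discrete_iff_isolated (D : Set ↥P.Xset) :
    DiscreteTopology ↥D ↔
      ∀ d ∈ D, ∃ V, IsOpen V ∧ d ∈ V ∧ ∀ y ∈ V, y ∈ D → y = d := by
  constructor
  · intro hdisc d hd
    have h1 : IsOpen ({⟨d, hd⟩} : Set ↥D) := isOpen_discrete _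
    rw [isOpen_induced_iff] at h1
    obtain ⟨V, hVo, hV⟩ := h1
    refine ⟨V, hVo, ?_, ?_⟩
    · have : (⟨d, hd⟩ : ↥D) ∈ (Subtype.val ⁻¹' V : Set ↥D) := by rw [hV]; rfl
      exact this
    · intro y hyV hyD
      have : (⟨y, hyD⟩ : ↥D) ∈ (Subtype.val ⁻¹' V : Set ↥D) := hyV
      rw [hV] at this
      exact congrArg Subtype.val this
  · intro h
    apply discreteTopology_iff_isOpen_singleton.mpr
    intro z
    obtain ⟨V, hVo, hdV, hV⟩ := h z.1 z.2
    rw [isOpen_induced_iff]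
    refine ⟨V, hVo, ?_⟩
    ext y
    simp only [Set.mem_preimage, Set.mem_singleton_iff]
    constructor
    · intro hy; exact Subtype.ext (hV y.1 hy y.2)
    · intro hy; rw [hy]; exact hdV

end Setup

namespace Setup

variable {P : Setup}

/-- For a point `(δ,0)` with `μ < cof δ`, every basic set containing it
contains a full tail of columns below `δ`. -/
lemma basic_tail {δ : Ordinal} (hcof : P.mu < δ.cof)
    {B : Set (Ordinal × Ordinal)} (hB : B ∈ P.basics)
    (hδB : ((δ, 0) : Ordinal × Ordinal) ∈ B) :
    ∃ b < δ, ∀ p : Ordinal × Ordinal, p ∈ P.Xset → b < p.1 → p.1 < δ → p ∈ B := by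
  rcases hB with ⟨α, hα, φ, hφ, η, hη, rfl⟩ | ⟨α, hαlam, hαcof, rfl⟩ | ⟨α, hαlam, hαcof, β, hβα, rfl⟩
  · rcases mem_U1_iff.mp hδB with h | ⟨_, ξ, hM, hηξ, hI⟩
    · exfalso
      have hδα : δ = α := congrArg Prod.fst h
      rw [hδα, hα.2] at hcof
      exact absurd hcof (lt_irrefl _)
    · have hI' : δ ∈ P.I α ξ := hI
      have hξμ : ξ < P.mu.ord := P.M_sub _ hφ hM
      have hlow : P.a α ξ < δ := by
        rcases (I_bounds hI').1.lt_or_eq with h' | h'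
        · exact h'
        · exfalso
          have hlim : Order.IsSuccLimit ξ := by
            by_contra hnl
            have : δ ∈ Set.Ioc (P.a α ξ) (P.a α (ξ + 1)) := by
              unfold Setup.I at hI'
              rwa [if_neg hnl] at hI' 
            exact absurd h' (ne_of_lt this.1)
          have hlub := P.a_closed α hα ξ hξμ hlim
          rw [h'] at hlub
          have hblsub : Ordinal.blsub ξ (fun ζ _ => P.a α ζ) = δ := by
            apply le_antisymm
            · apply Ordinal.blsub_le
              intro ζ hζ
              have := P.a_mono α hα ξ hξμ ζ hζ
              rwa [h'] at this
            · apply hlub.2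
              rintro b ⟨ζ, hζ, rfl⟩
              exact (Ordinal.lt_blsub _ ζ hζ).le
          have hc := Ordinal.cof_blsub_le (fun ζ (_ : ζ < ξ) => P.a α ζ)
          rw [hblsub] at hc
          exact absurd (hcof.trans (hc.trans_lt (Cardinal.lt_ord.mp hξμ)))
            (lt_irrefl _)
      refine ⟨P.a α ξ, hlow, ?_⟩
      intro p hpX hbp hpδ
      refine mem_U1_iff.mpr (Or.inr ⟨hpX, ξ, hM, hηξ, Ioc_subset_I α ξ ⟨hbp, ?_⟩⟩)
      exact hpδ.le.trans (I_bounds hI').2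
  · exfalso
    have hδα : δ = α := congrArg Prod.fst hδB
    rw [← hδα] at hαcof
    exact absurd (hcof.trans hαcof) (lt_irrefl _)
  · obtain ⟨_, h1, h2⟩ := mem_U3_iff.mp hδB
    exact ⟨β, h1, fun p hpX hbp hpδ => mem_U3_iff.mpr ⟨hpX, hbp, hpδ.le.trans h2⟩⟩

/-- A closed set of columns strictly below `δ` cannot be unbounded in `δ` when `μ < cof δ`. -/
lemma no_unbounded {δ : Ordinal} (hδlam : δ < P.lam.ord) (hcof : P.mu < δ.cof)
    {F : Set ↥P.Xset} (hF : IsClosed F)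
    (hbd : ∀ x ∈ F, (x : Ordinal × Ordinal).1 < δ)
    (hunb : ∀ b < δ, ∃ x ∈ F, b < (x : Ordinal × Ordinal).1) : False := by
  have hδpos : 0 < δ := by
    rcases eq_zero_or_pos δ with rfl | h
    · rw [Ordinal.cof_zero] at hcof
      exact ((Cardinal.zero_le P.mu).not_gt hcof).elim
    · exact h
  have hXδ : ((δ, 0) : Ordinal × Ordinal) ∈ P.Xset := by
    refine ⟨hδlam, Or.inr ⟨?_, rfl⟩⟩
    intro hS
    rw [hS.2] at hcof
    exact absurd hcof (lt_irrefl _)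
  set y : ↥P.Xset := ⟨((δ, 0) : Ordinal × Ordinal), hXδ⟩ with hy
  have hyF : y ∉ F := by
    intro h
    exact absurd (hbd y h) (lt_irrefl δ)
  have hbasis := TopologicalSpace.isTopologicalBasis_of_subbasis
    (rfl : P.instTopo = TopologicalSpace.generateFrom {V | ∃ B ∈ P.basics, V = Subtype.val ⁻¹' B})
  obtain ⟨v, hv, hyv, hvF⟩ := hbasis.exists_subset_of_mem_open (show y ∈ Fᶜ from hyF)
    hF.isOpen_compl
  obtain ⟨f, ⟨hffin, hfsub⟩, rfl⟩ := hv
  have main : ∀ fs : Set (Set ↥P.Xset), fs.Finite →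
      fs ⊆ {V | ∃ B ∈ P.basics, V = Subtype.val ⁻¹' B} → y ∈ ⋂₀ fs →
      ∃ b, b < δ ∧ ∀ p : ↥P.Xset, b < (p : Ordinal × Ordinal).1 →
        (p : Ordinal × Ordinal).1 < δ → p ∈ ⋂₀ fs := by
    intro fs hfin
    refine Set.Finite.induction_on fs hfin ?_ ?_
    · intro _ _
      exact ⟨0, hδpos, fun p _ _ => by simp⟩
    · intro V s hVs hsfin IHm hsub hyIn
      obtain ⟨b1, hb1δ, hb1⟩ := IHm (fun W hW => hsub (Set.mem_insert_of_mem _ hW))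
        (Set.mem_sInter.mpr fun W hW => Set.mem_sInter.mp hyIn W (Set.mem_insert_of_mem _ hW))
      obtain ⟨B, hB, rfl⟩ := hsub (Set.mem_insert V s)
      have hδB : ((δ, 0) : Ordinal × Ordinal) ∈ B :=
        Set.mem_sInter.mp hyIn _ (Set.mem_insert _ s)
      obtain ⟨b2, hb2δ, hb2⟩ := basic_tail hcof hB hδB
      refine ⟨max b1 b2, max_lt hb1δ hb2δ, ?_⟩
      intro p hbp hpδ
      rw [Set.mem_sInter]
      intro W hW
      rcases Set.mem_insert_iff.mp hW with rfl | hW'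
      · exact hb2 p p.2 (lt_of_le_of_lt (le_max_right b1 b2) hbp) hpδ
      · exact Set.mem_sInter.mp (hb1 p (lt_of_le_of_lt (le_max_left b1 b2) hbp) hpδ) W hW'
  obtain ⟨b, hbδ, hb⟩ := main f hffin hfsub hyv
  obtain ⟨x, hxF, hbx⟩ := hunb b hbδ
  exact hvF (hb x hbx (hbd x hxF)) hxF

/-- The main induction: every closed subset of the columns strictly below `δ`
admits a closed discrete kernel for any open neighborhood assignment. -/
lemma key (P : Setup) (U : ↥P.Xset → Set ↥P.Xset) :
    ∀ δ, δ < P.lam.ord → ∀ F : Set ↥P.Xset, IsClosed F →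
      (∀ x ∈ F, (x : Ordinal × Ordinal).1 < δ) →
      (∀ x ∈ F, IsOpen (U x) ∧ x ∈ U x) →
      ∃ D, D ⊆ F ∧ IsClosed D ∧ DiscreteTopology ↥D ∧ F ⊆ ⋃ x ∈ D, U x := by
  intro δ
  induction δ using Ordinal.induction with
  | h δ IH =>
  intro hδlam F hF hbd hU
  rcases Ordinal.zero_or_succ_or_isSuccLimit δ with rfl | ⟨γ, rfl⟩ | hlim
  · -- δ = 0
    have hFe : F = ∅ :=
      Set.eq_empty_iff_forall_notMem.mpr fun x hx => (zero_le (a := (x : Ordinal × Ordinal).1)).not_gt (hbd x hx)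
    subst hFe
    refine ⟨∅, subset_rfl, isClosed_empty, ?_, by simp⟩
    rw [discrete_iff_isolated]
    intro d hd
    exact absurd hd (Set.notMem_empty d)
  · -- δ = succ γ
    have hγδ : γ < Order.succ γ := Order.lt_succ γ
    have hγlam : γ < P.lam.ord := hγδ.trans hδlam
    set D₁ : Set ↥P.Xset := F ∩ {x : ↥P.Xset | (x : Ordinal × Ordinal).1 = γ} with hD₁def
    have hD₁c : IsClosed D₁ := hF.inter (isClosed_colset γ)
    have hD₁F : D₁ ⊆ F := Set.inter_subset_left
    set O₁ : Set ↥P.Xset := ⋃ d ∈ D₁, U d with hO₁def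
    have hO₁o : IsOpen O₁ := isOpen_biUnion fun d hd => (hU d (hD₁F hd)).1
    have hD₁O : D₁ ⊆ O₁ := fun d hd => Set.mem_biUnion hd (hU d (hD₁F hd)).2
    set F₂ : Set ↥P.Xset := F ∩ O₁ᶜ with hF₂def
    have hF₂c : IsClosed F₂ := hF.inter hO₁o.isClosed_compl
    have hF₂bd : ∀ x ∈ F₂, (x : Ordinal × Ordinal).1 < γ := by
      intro x hx
      rcases (Order.lt_succ_iff.mp (hbd x hx.1)).lt_or_eq with h | h
      · exact h
      · exact absurd (hD₁O ⟨hx.1, h⟩) hx.2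
    obtain ⟨D₂, hD₂F, hD₂c, hD₂d, hD₂cov⟩ :=
      IH γ hγδ hγlam F₂ hF₂c hF₂bd fun x hx => hU x hx.1
    have hD₂F' : D₂ ⊆ F := hD₂F.trans Set.inter_subset_left
    refine ⟨D₁ ∪ D₂, Set.union_subset hD₁F hD₂F', hD₁c.union hD₂c, ?_, ?_⟩
    · rw [discrete_iff_isolated]
      intro d hd
      rcases hd with hd | hd
      · obtain ⟨V, hVo, hdV, hV⟩ := nbhd_isolating d
        refine ⟨V ∩ U d, hVo.inter (hU d (hD₁F hd)).1, ⟨hdV, (hU d (hD₁F hd)).2⟩, ?_⟩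
        rintro z ⟨hzV, hzU⟩ (hzD | hzD)
        · exact hV z hzV (by rw [hzD.2, hd.2])
        · exact absurd (Set.mem_biUnion hd hzU) (hD₂F hzD).2
      · obtain ⟨V, hVo, hdV, hV⟩ := (discrete_iff_isolated D₂).mp hD₂d d hd
        have hdD₁ : d ∉ D₁ := fun h => (hD₂F hd).2 (hD₁O h)
        refine ⟨V ∩ D₁ᶜ, hVo.inter hD₁c.isOpen_compl, ⟨hdV, hdD₁⟩, ?_⟩
        rintro z ⟨hzV, hzD₁⟩ (hzD | hzD)
        · exact absurd hzD hzD₁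
        · exact hV z hzV hzD
    · intro x hx
      by_cases hxO : x ∈ O₁
      · obtain ⟨d, hd, hxd⟩ := Set.mem_iUnion₂.mp hxO
        exact Set.mem_iUnion₂.mpr ⟨d, Or.inl hd, hxd⟩
      · obtain ⟨d, hd, hxd⟩ := Set.mem_iUnion₂.mp (hD₂cov ⟨hx, hxO⟩)
        exact Set.mem_iUnion₂.mpr ⟨d, Or.inr hd, hxd⟩
  · -- δ limit
    by_cases hbdd : ∃ γ < δ, ∀ x ∈ F, (x : Ordinal × Ordinal).1 < γ
    · obtain ⟨γ, hγδ, hγ⟩ := hbdd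
      exact IH γ hγδ (hγδ.trans hδlam) F hF hγ hU
    push_neg at hbdd
    have hunb : ∀ b < δ, ∃ x ∈ F, b < (x : Ordinal × Ordinal).1 := by
      intro b hb
      have hb1 : b + 1 < δ := by
        rw [Ordinal.add_one_eq_succ]; exact hlim.succ_lt hb
      obtain ⟨x, hxF, hx⟩ := hbdd (b + 1) hb1
      refine ⟨x, hxF, lt_of_lt_of_le ?_ hx⟩
      rw [Ordinal.add_one_eq_succ]; exact Order.lt_succ b
    rcases lt_or_ge P.mu δ.cof with hgt | hcofle
    · exact (no_unbounded hδlam hgt hF hbd hunb).elim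
    have hνμ : δ.cof.ord ≤ P.mu.ord := Cardinal.ord_le_ord.mpr hcofle
    obtain ⟨f, hf⟩ := Ordinal.exists_fundamental_sequence δ
    obtain ⟨g, hg_eq⟩ : ∃ g : Ordinal → Ordinal,
        ∀ {i : Ordinal} (h : i < δ.cof.ord), g i = f i h :=
      ⟨fun i => if h : i < δ.cof.ord then f i h else 0, fun {i} h => dif_pos h⟩
    have hg_lt : ∀ {i : Ordinal}, i < δ.cof.ord → g i < δ := by
      intro i hi
      rw [hg_eq hi]
      exact hf.lt hi
    have hg_mono : ∀ {i j : Ordinal}, i < j → j < δ.cof.ord → g i < g j := by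
      intro i j hij hj
      rw [hg_eq (hij.trans hj), hg_eq hj]
      exact hf.2.1 _ _ hij
    have hg_mono_le : ∀ {i j : Ordinal}, i ≤ j → j < δ.cof.ord → g i ≤ g j := by
      intro i j hij hj
      rcases hij.lt_or_eq with h | rfl
      · exact (hg_mono h hj).le
      · rfl
    have hg_cof : ∀ b < δ, ∃ i, i < δ.cof.ord ∧ b ≤ g i := by
      intro b hb
      have hb' : b < Ordinal.blsub δ.cof.ord f := by rw [hf.blsub_eq]; exact hb
      obtain ⟨i, hi, hble⟩ := Ordinal.lt_blsub_iff.mp hb'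
      exact ⟨i, hi, by rw [hg_eq hi]; exact hble⟩
    set W : Ordinal → Set ↥P.Xset := fun i =>
      {x : ↥P.Xset | (x : Ordinal × Ordinal).1 ≤ g i ∧
        ∀ j < i, ¬ (x : Ordinal × Ordinal).1 ≤ g j} with hWdef
    set Vp : Ordinal → Set ↥P.Xset := fun i =>
      {x : ↥P.Xset | ∃ j < i, (x : Ordinal × Ordinal).1 ≤ g j} with hVpdef
    have hWVp : ∀ i, W i = Lset P (g i) ∩ (Vp i)ᶜ := by
      intro i
      ext x
      constructor
      · rintro ⟨h1, h2⟩
        refine ⟨h1, ?_⟩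
        rintro ⟨j, hj, hle⟩
        exact h2 j hj hle
      · rintro ⟨h1, h2⟩
        exact ⟨h1, fun j hj hle => h2 ⟨j, hj, hle⟩⟩
    have hVpo : ∀ i, IsOpen (Vp i) := by
      intro i
      rw [isOpen_iff_forall_mem_open]
      rintro x ⟨j, hj, hle⟩
      obtain ⟨V, hVo, hxV, hV⟩ := nbhd_le x
      exact ⟨V, fun z hz => ⟨j, hj, (hV z hz).trans hle⟩, hVo, hxV⟩
    have hVpc : ∀ i < δ.cof.ord, IsClosed (Vp i) := by
      intro i hi
      rcases Ordinal.zero_or_succ_or_isSuccLimit i with rfl | ⟨k, rfl⟩ | hilim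
      · have he : Vp 0 = ∅ := by
          ext x
          constructor
          · rintro ⟨j, hj, _⟩
            exact ((zero_le (a := j)).not_gt hj).elim
          · exact fun h => h.elim
        rw [he]; exact isClosed_empty
      · have hkν : k < δ.cof.ord := (Order.lt_succ k).trans hi
        have he : Vp (Order.succ k) = Lset P (g k) := by
          ext x
          constructor
          · rintro ⟨j, hj, hle⟩
            exact hle.trans (hg_mono_le (Order.lt_succ_iff.mp hj) hkν)
          · exact fun h => ⟨k, Order.lt_succ k, h⟩
        rw [he]; exact isClosed_Lset _
      · set σ : Ordinal := Ordinal.bsup i (fun j _ => g j) with hσdef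
        have hjν : ∀ {j : Ordinal}, j < i → j < δ.cof.ord := fun {j} hj => hj.trans hi
        have hgbsup : ∀ j (hj : j < i), g j < σ := by
          intro j hj
          have hsj : Order.succ j < i := hilim.succ_lt hj
          exact lt_of_lt_of_le (hg_mono (Order.lt_succ j) (hjν hsj))
            (Ordinal.le_bsup _ _ hsj)
        have hσδ : σ < δ := Ordinal.bsup_lt_ord (Cardinal.lt_ord.mp hi)
          fun j hj => hg_lt (hjν hj)
        have hσcof : σ.cof < P.mu := by
          have h1 : σ = Ordinal.blsub i (fun j _ => g j) :=
            (Ordinal.bsup_eq_blsub_iff_lt_bsup _).mpr hgbsup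
          rw [h1]
          exact (Ordinal.cof_blsub_le _).trans_lt (Cardinal.lt_ord.mp (hi.trans_le hνμ))
        have hVσ : Vp i = {x : ↥P.Xset | (x : Ordinal × Ordinal).1 < σ} := by
          ext x
          constructor
          · rintro ⟨j, hj, hle⟩
            exact lt_of_le_of_lt hle (hgbsup j hj)
          · intro h
            obtain ⟨j, hj, hlt⟩ := (Ordinal.lt_bsup _).mp h
            exact ⟨j, hj, hlt.le⟩
        rw [hVσ]
        exact isClosed_fstlt (hσδ.trans hδlam) hσcof
    have hWo : ∀ i < δ.cof.ord, IsOpen (W i) := by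
      intro i hi
      rw [hWVp]
      exact (isOpen_Lset _).inter (hVpc i hi).isOpen_compl
    have hWc : ∀ i, IsClosed (W i) := by
      intro i
      rw [hWVp]
      exact (isClosed_Lset _).inter (hVpo i).isClosed_compl
    have hWdisj : ∀ {i j : Ordinal}, i < j → ∀ x, x ∈ W i → x ∈ W j → False := by
      intro i j hij x hxi hxj
      exact hxj.2 i hij hxi.1
    have hleast : ∀ x ∈ F, ∃ i, i < δ.cof.ord ∧ x ∈ W i := by
      intro x hx
      set A : Set Ordinal := {i | i < δ.cof.ord ∧ (x : Ordinal × Ordinal).1 ≤ g i} with hAdef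
      have hAne : A.Nonempty := by
        obtain ⟨i, hi, hle⟩ := hg_cof _ (hbd x hx)
        exact ⟨i, hi, hle⟩
      have hmem := csInf_mem hAne
      refine ⟨sInf A, hmem.1, hmem.2, ?_⟩
      intro j hj hle
      have hjA : j ∈ A := ⟨hj.trans hmem.1, hle⟩
      exact absurd (csInf_le' hjA) (not_le.mpr hj)
    have hpieces : ∀ i : Ordinal, ∃ D : Set ↥P.Xset, D ⊆ F ∩ W i ∧ IsClosed D ∧
        DiscreteTopology ↥D ∧ (i < δ.cof.ord → F ∩ W i ⊆ ⋃ x ∈ D, U x) := by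
      intro i
      by_cases hi : i < δ.cof.ord
      · have hgi1 : g i + 1 < δ := by
          rw [Ordinal.add_one_eq_succ]; exact hlim.succ_lt (hg_lt hi)
        obtain ⟨D, h1, h2, h3, h4⟩ := IH (g i + 1) hgi1 (hgi1.trans hδlam) (F ∩ W i)
          (hF.inter (hWc i))
          (by
            intro x hx
            have hxle : (x : Ordinal × Ordinal).1 ≤ g i := hx.2.1
            rw [Ordinal.add_one_eq_succ]
            exact Order.lt_succ_iff.mpr hxle)
          fun x hx => hU x hx.1
        exact ⟨D, h1, h2, h3, fun _ => h4⟩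
      · refine ⟨∅, Set.empty_subset _, isClosed_empty, ?_, fun h => absurd h hi⟩
        rw [discrete_iff_isolated]
        intro d hd
        exact absurd hd (Set.notMem_empty d)
    choose Dp hDp1 hDp2 hDp3 hDp4 using hpieces
    set D : Set ↥P.Xset := ⋃ i ∈ Set.Iio δ.cof.ord, Dp i with hDdef
    have hDF : D ⊆ F := by
      intro d hd
      obtain ⟨i, _, hdi⟩ := Set.mem_iUnion₂.mp hd
      exact (hDp1 i hdi).1
    have hDW : ∀ i, i < δ.cof.ord → ∀ d, d ∈ D → d ∈ W i → d ∈ Dp i := by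
      intro i hi d hd hdW
      obtain ⟨j, hj, hdj⟩ := Set.mem_iUnion₂.mp hd
      rcases lt_trichotomy i j with h | rfl | h
      · exact ((hWdisj h d hdW (hDp1 j hdj).2)).elim
      · exact hdj
      · exact ((hWdisj h d (hDp1 j hdj).2 hdW)).elim
    refine ⟨D, hDF, ?_, ?_, ?_⟩
    · rw [← isOpen_compl_iff, isOpen_iff_forall_mem_open]
      intro x hx
      by_cases hxF : x ∈ F
      · obtain ⟨i, hi, hxW⟩ := hleast x hxF
        refine ⟨W i ∩ (Dp i)ᶜ, ?_, (hWo i hi).inter (hDp2 i).isOpen_compl, hxW, ?_⟩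
        · rintro z ⟨hzW, hzD⟩ hzDm
          exact hzD (hDW i hi z hzDm hzW)
        · intro hxD
          exact hx (Set.mem_iUnion₂.mpr ⟨i, hi, hxD⟩)
      · exact ⟨Fᶜ, fun z hz hzD => hz (hDF hzD), hF.isOpen_compl, hxF⟩
    · rw [discrete_iff_isolated]
      intro d hd
      obtain ⟨i, hi, hdi⟩ := Set.mem_iUnion₂.mp hd
      obtain ⟨V, hVo, hdV, hV⟩ := (discrete_iff_isolated (Dp i)).mp (hDp3 i) d hdi
      refine ⟨V ∩ W i, hVo.inter (hWo i hi), ⟨hdV, (hDp1 i hdi).2⟩, ?_⟩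
      rintro z ⟨hzV, hzW⟩ hzD
      exact hV z hzV (hDW i hi z hzD hzW)
    · intro x hx
      obtain ⟨i, hi, hxW⟩ := hleast x hx
      obtain ⟨d, hdD, hxd⟩ := Set.mem_iUnion₂.mp (hDp4 i hi ⟨hx, hxW⟩)
      exact Set.mem_iUnion₂.mpr ⟨d, Set.mem_iUnion₂.mpr ⟨i, hi, hdD⟩, hxd⟩

end Setup

/-- Every closed bounded `F ⊆ X` is a D-subspace of `X`. -/
theorem stmt12 (P : Setup) (F : Set ↥P.Xset) (hF : IsClosed F)
    (hbd : ∃ β < P.lam.ord, ∀ γ ∈ P.pi F, γ ≤ β)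
    (U : ↥P.Xset → Set ↥P.Xset) (hU : ∀ x ∈ F, IsOpen (U x) ∧ x ∈ U x) :
    ∃ D ⊆ F, IsClosed D ∧ DiscreteTopology D ∧ F ⊆ ⋃ x ∈ D, U x := by
  obtain ⟨β, hβ, hbd'⟩ := hbd
  have hδ : β + 1 < P.lam.ord := by
    rw [Ordinal.add_one_eq_succ]
    exact (Setup.lam_ord_limit P).succ_lt hβ
  obtain ⟨D, h1, h2, h3, h4⟩ := Setup.key P U (β + 1) hδ F hF
    (by
      intro x hx
      have hxβ : (x : Ordinal × Ordinal).1 ≤ β := hbd' _ ⟨x, hx, rfl⟩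
      rw [Ordinal.add_one_eq_succ]
      exact Order.lt_succ_iff.mpr hxβ)
    hU
  exact ⟨D, h1, h2, h3, h4⟩
end DSoukupPaper
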